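/- Hermitian property of the prequantization representation (second part of the theorem 'There exists a Hermitian representation of the Lie algebroid A on (L → M, h) given by π(X) := ∇_{α(X)} − 2πi⟨μ̃, J*X⟩'): Let L be an A-module with a Hermitian metric h, let D : g → End_ℝ(L) satisfy the Leibniz rule over α and be Hermitian with respect to h, and let μ : g → A satisfy star(μ(X)) = μ(X) for all X ∈ g (the momentum is real-valued). Then π(X)(s) := D(X)(s) − ((2πi) • μ(X)) • s satisfies h(π(X)(s), t) + h(s, π(X)(t)) = α(X)(h(s, t)) for all X ∈ g and s, t ∈ L. -/
import Mathlib


/-- **Hermitian property of the prequantization representation.**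
If `D` satisfies the Leibniz rule over `α` and is Hermitian with respect to the
Hermitian metric `h`, and the momentum `μ` is real-valued (`star (μ X) = μ X`),
then `π(X) s = D(X) s − ((2πi) • μ(X)) • s` is Hermitian with respect to `h`. -/
theorem prequantization_representation_hermitian
    {A : Type*} [CommRing A] [Algebra ℂ A] [StarRing A]
    {g : Type*} [LieRing g] [LieAlgebra ℝ g]
    {L : Type*} [AddCommGroup L] [Module A L] [Module ℝ L]
    (hstarA : ∀ (c : ℂ) (a : A), star (c • a) = (starRingEnd ℂ c) • star a)
    (α : g →ₗ[ℝ] Derivation ℂ A A)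
    (hα : ∀ (X Y : g) (a : A), α ⁅X, Y⁆ a = α X (α Y a) - α Y (α X a))
    (h : L → L → A)
    (haddl : ∀ (s s' t : L), h (s + s') t = h s t + h s' t)
    (haddr : ∀ (s t t' : L), h s (t + t') = h s t + h s t')
    (hsmull : ∀ (a : A) (s t : L), h (a • s) t = star a * h s t)
    (hsmulr : ∀ (a : A) (s t : L), h s (a • t) = a * h s t)
    (D : g →ₗ[ℝ] L →ₗ[ℝ] L)
    (hD : ∀ (X : g) (a : A) (s : L), D X (a • s) = a • D X s + α X a • s)
    (hDherm : ∀ (X : g) (s t : L), h (D X s) t + h s (D X t) = α X (h s t))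
    (μ : g →ₗ[ℝ] A)
    (hμreal : ∀ X : g, star (μ X) = μ X)
    (π : g → L → L)
    (hπ : ∀ (X : g) (s : L),
      π X s = D X s - ((2 * (Real.pi : ℂ) * Complex.I) • μ X) • s) :
    ∀ (X : g) (s t : L), h (π X s) t + h s (π X t) = α X (h s t) := by
  intro X s t
  have h0l : ∀ t : L, h 0 t = 0 := by
    intro t
    have := haddl 0 0 t
    simp at this
    linear_combination this
  have h0r : ∀ s : L, h s 0 = 0 := by
    intro s
    have := haddr s 0 0
    simp at this
    linear_combination this
  have hsubl : ∀ (a b t : L), h (a - b) t = h a t - h b t := by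
    intro a b t
    rw [eq_sub_iff_add_eq, ← haddl, sub_add_cancel]
  have hsubr : ∀ (s a b : L), h s (a - b) = h s a - h s b := by
    intro s a b
    rw [eq_sub_iff_add_eq, ← haddr, sub_add_cancel]
  have hstar : star ((2 * (Real.pi : ℂ) * Complex.I) • μ X)
      = -((2 * (Real.pi : ℂ) * Complex.I) • μ X) := by
    rw [hstarA, hμreal]
    have : (starRingEnd ℂ) (2 * (Real.pi : ℂ) * Complex.I)
        = -(2 * (Real.pi : ℂ) * Complex.I) := by
      rw [map_mul, map_mul, Complex.conj_I, Complex.conj_ofReal,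
        map_ofNat]
      ring
    rw [this, neg_smul]
  rw [hπ, hπ, hsubl, hsubr, hsmull, hsmulr, hstar]
  have := hDherm X s t
  linear_combination this
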